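/- Suppose ip(d,i) = ip(d′,i′). Then: (1) if ℓ_{d,i} < ℓ_{d′,i′} and x_{d,i} = S, then S_d[i..] < S_{d′}[i′..]; (2) if ℓ_{d,i} < ℓ_{d′,i′} and x_{d,i} = L, then S_{d′}[i′..] < S_d[i..]; (3) if ℓ_{d,i} = ℓ_{d′,i′}, x_{d,i} = S and x_{d′,i′} = L, then S_d[i..] < S_{d′}[i′..]; (4) if ℓ_{d,i} = ℓ_{d′,i′}, x_{d,i} = x_{d′,i′} and the mismatch characters satisfy c_{d,i} < c_{d′,i′}, then S_d[i..] < S_{d′}[i′..]. -/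

import Mathlib

open List

/-- `MFactor R SA suf U c ip`: `U` is the matching factor of the suffix `suf`
w.r.t. `R` (the longest prefix of `suf` occurring in `R`), `c` is the mismatch
character (the character of `suf` following `U`), and `ip` is the insert point
of `suf` in the suffix array `SA` of `R`: the greatest rank `j` such that `U`
occurs at `SA j` and `R[SA j..] < Uc`, if such a rank exists, and otherwise
the least rank `j` such that `U` occurs at `SA j`. -/
def MFactor {α : Type*} [LinearOrder α] (R : List α) (SA : ℕ → ℕ)
    (suf U : List α) (c : α) (ip : ℕ) : Prop :=
  (∃ V, suf = U ++ c :: V) ∧ U <:+: R ∧ ¬ ((U ++ [c]) <:+: R) ∧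
  (IsGreatest {j | j < R.length ∧ U <+: R.drop (SA j) ∧
      List.Lex (· < ·) (R.drop (SA j)) (U ++ [c])} ip ∨
   ((∀ j, j < R.length → U <+: R.drop (SA j) →
      ¬ List.Lex (· < ·) (R.drop (SA j)) (U ++ [c])) ∧
    IsLeast {j | j < R.length ∧ U <+: R.drop (SA j)} ip))

/-- Lex comparison after cancelling a common prefix. -/
lemma lex_append_iff {α : Type*} [LinearOrder α] (P xs ys : List α) :
    List.Lex (· < ·) (P ++ xs) (P ++ ys) ↔ List.Lex (· < ·) xs ys := by
  induction P with
  | nil => rfl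
  | cons a P ih =>
    simp only [List.cons_append]
    constructor
    · intro h
      cases h with
      | rel h => exact absurd h (lt_irrefl a)
      | cons h => exact ih.mp h
    · intro h
      exact List.Lex.cons (ih.mpr h)

lemma mf_prefix {α : Type*} [LinearOrder α] {R : List α} {SA : ℕ → ℕ}
    {suf U : List α} {c : α} {ip : ℕ} (h : MFactor R SA suf U c ip) :
    U <+: R.drop (SA ip) := by
  rcases h with ⟨-, -, -, hg | hl⟩
  · exact hg.1.2.1
  · exact hl.2.1.2

/-- If `Uc < W` where `U <+: W`, `W` a suffix of `R`, and `Uc` is not an infix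
of `R`, then `W = U ++ b :: T` with `c < b`. -/
lemma key_lt {α : Type*} [LinearOrder α] {R W U : List α} {c : α}
    (hU : U <+: W) (hW : W <:+ R) (hinf : ¬ ((U ++ [c]) <:+: R))
    (hlex : List.Lex (· < ·) (U ++ [c]) W) :
    ∃ b T, W = U ++ b :: T ∧ c < b := by
  obtain ⟨T, rfl⟩ := hU
  rw [lex_append_iff] at hlex
  cases T with
  | nil => cases hlex
  | cons b T2 =>
    cases hlex with
    | rel h => exact ⟨b, T2, rfl, h⟩
    | cons h =>
      exfalso
      exact hinf (((prefix_append_right_inj U).mpr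
        ⟨T2, rfl⟩).isInfix.trans hW.isInfix)

/-- If `W < Uc` where `W = U ++ b :: T`, then `b < c`. -/
lemma key_gt {α : Type*} [LinearOrder α] {U T : List α} {b c : α}
    (hlex : List.Lex (· < ·) (U ++ b :: T) (U ++ [c])) : b < c := by
  rw [lex_append_iff] at hlex
  cases hlex with
  | rel h => exact h
  | cons h => cases h

/-- Tie-breaking comparisons when the insert points coincide. Here
`x = S` is expressed as `Uc < R[SA[ip]..]` and `x = L` as `R[SA[ip]..] < Uc`. -/
theorem stmt11 {α : Type*} [LinearOrder α] (R : List α) (SA : ℕ → ℕ)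
    (hbij : Set.BijOn SA (Set.Iio R.length) (Set.Iio R.length))
    (hsort : ∀ r r', r < r' → r' < R.length →
      List.Lex (· < ·) (R.drop (SA r)) (R.drop (SA r')))
    (Sd Sd' : List α) (i i' : ℕ)
    (U U' : List α) (c c' : α) (ip : ℕ)
    (h1 : MFactor R SA (Sd.drop i) U c ip)
    (h2 : MFactor R SA (Sd'.drop i') U' c' ip) :
    (U.length < U'.length → List.Lex (· < ·) (U ++ [c]) (R.drop (SA ip)) →
      List.Lex (· < ·) (Sd.drop i) (Sd'.drop i')) ∧
    (U.length < U'.length → List.Lex (· < ·) (R.drop (SA ip)) (U ++ [c]) →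
      List.Lex (· < ·) (Sd'.drop i') (Sd.drop i)) ∧
    (U.length = U'.length → List.Lex (· < ·) (U ++ [c]) (R.drop (SA ip)) →
      List.Lex (· < ·) (R.drop (SA ip)) (U' ++ [c']) →
      List.Lex (· < ·) (Sd.drop i) (Sd'.drop i')) ∧
    (U.length = U'.length →
      ((List.Lex (· < ·) (U ++ [c]) (R.drop (SA ip)) ∧
        List.Lex (· < ·) (U' ++ [c']) (R.drop (SA ip))) ∨
       (List.Lex (· < ·) (R.drop (SA ip)) (U ++ [c]) ∧
        List.Lex (· < ·) (R.drop (SA ip)) (U' ++ [c']))) →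
      c < c' → List.Lex (· < ·) (Sd.drop i) (Sd'.drop i')) := by
  have hUW : U <+: R.drop (SA ip) := mf_prefix h1
  have hU'W : U' <+: R.drop (SA ip) := mf_prefix h2
  obtain ⟨⟨V, hV⟩, -, hcinf, -⟩ := h1
  obtain ⟨⟨V', hV'⟩, -, -, -⟩ := h2
  have hWsuf : R.drop (SA ip) <:+ R := drop_suffix _ _
  refine ⟨?_, ?_, ?_, ?_⟩
  · -- (1) ℓ < ℓ', x = S
    intro hlen hS
    obtain ⟨b, T, hWeq, hcb⟩ := key_lt hUW hWsuf hcinf hS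
    -- U' = U ++ b :: T' for some T'
    have hUU' : U <+: U' := prefix_of_prefix_length_le hUW hU'W hlen.le
    obtain ⟨Tu, rfl⟩ := hUU'
    have hTu : Tu <+: b :: T := by
      have := hU'W
      rw [hWeq] at this
      exact (prefix_append_right_inj U).mp this
    obtain ⟨Tu2, rfl⟩ : ∃ Tu2, Tu = b :: Tu2 := by
      cases Tu with
      | nil => simp at hlen
      | cons x Tu2 =>
        obtain ⟨-, h⟩ := cons_prefix_cons.mp hTu
        exact ⟨Tu2, by rw [cons_prefix_cons.mp hTu |>.1]⟩
    rw [hV, hV',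
      show (U ++ b :: Tu2) ++ c' :: V' = U ++ b :: (Tu2 ++ c' :: V') from by simp,
      lex_append_iff]
    exact List.Lex.rel hcb
  · -- (2) ℓ < ℓ', x = L
    intro hlen hL
    have hUU' : U <+: U' := prefix_of_prefix_length_le hUW hU'W hlen.le
    obtain ⟨T, hWeq⟩ := hUW
    obtain ⟨Tu, rfl⟩ := hUU'
    have hTu : Tu <+: T := by
      have := hU'W
      rw [← hWeq] at this
      exact (prefix_append_right_inj U).mp this
    obtain ⟨b, Tu2, rfl⟩ : ∃ b Tu2, Tu = b :: Tu2 := by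
      cases Tu with
      | nil => simp at hlen
      | cons x Tu2 => exact ⟨x, Tu2, rfl⟩
    obtain ⟨T2, rfl⟩ : ∃ T2, T = b :: T2 := by
      cases T with
      | nil => simp at hTu
      | cons y T2 =>
        obtain ⟨h, -⟩ := cons_prefix_cons.mp hTu
        exact ⟨T2, by rw [h]⟩
    rw [← hWeq] at hL
    have hbc : b < c := key_gt hL
    rw [hV, hV',
      show (U ++ b :: Tu2) ++ c' :: V' = U ++ b :: (Tu2 ++ c' :: V') from by simp,
      lex_append_iff]
    exact List.Lex.rel hbc
  · -- (3) ℓ = ℓ', x = S, x' = L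
    intro hlen hS hL
    have hEq : U = U' :=
      (prefix_of_prefix_length_le hUW hU'W hlen.le).eq_of_length hlen
    subst hEq
    obtain ⟨b, T, hWeq, hcb⟩ := key_lt hUW hWsuf hcinf hS
    rw [hWeq] at hL
    have hbc' : b < c' := key_gt hL
    rw [hV, hV', lex_append_iff]
    exact List.Lex.rel (hcb.trans hbc')
  · -- (4) ℓ = ℓ', same flag, c < c'
    intro hlen _ hcc'
    have hEq : U = U' :=
      (prefix_of_prefix_length_le hUW hU'W hlen.le).eq_of_length hlen
    subst hEq
    rw [hV, hV', lex_append_iff]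
    exact List.Lex.rel hcc'
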